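/- For i, j ≥ 1, the generating function V_{i,j}(t) for triples of pairwise nonintersecting walks starting at heights 0, 2i, 2i+2j satisfies V_{i,j}(t) = (1/(1−8t))·(1 − D(2t)^i)·(1 − D(2t)^j), where D(t) = C(t) − 1 and C(t) is the Catalan generating function. -/

import Mathlib

open PowerSeries Finset

/-- Generating function of the Catalan numbers `C_n = (1/(n+1))·binom(2n,n)`. -/
noncomputable def catGF : PowerSeries ℚ :=
  PowerSeries.mk fun n => (Nat.choose (2 * n) n : ℚ) / (n + 1)

/-- `D(t) = C(t) - 1`. -/
noncomputable def DGF : PowerSeries ℚ := catGF - 1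

/-- A lattice walk of length `n` with steps `±1`. -/
def IsWalk (n : ℕ) (L : Fin (n + 1) → ℤ) : Prop :=
  ∀ k : Fin n, |L k.succ - L k.castSucc| = 1

/-- Two walks intersect (share a common point at the same time). -/
def Meets {m : ℕ} (L L' : Fin m → ℤ) : Prop := ∃ k, L k = L' k

/-- All triples of walks of length `n` starting at heights `0, 2i, 2i+2j`. -/
def USet (i j n : ℕ) :
    Set ((Fin (n + 1) → ℤ) × (Fin (n + 1) → ℤ) × (Fin (n + 1) → ℤ)) :=
  {T | IsWalk n T.1 ∧ IsWalk n T.2.1 ∧ IsWalk n T.2.2 ∧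
    T.1 0 = 0 ∧ T.2.1 0 = 2 * i ∧ T.2.2 0 = 2 * i + 2 * j}

/-- Triples where `L₁` and `L₂` are nonintersecting. -/
def W12Set (i j n : ℕ) := {T ∈ USet i j n | ¬ Meets T.1 T.2.1}

/-- Triples where `L₂` and `L₃` are nonintersecting. -/
def W23Set (i j n : ℕ) := {T ∈ USet i j n | ¬ Meets T.2.1 T.2.2}

/-- Triples where `L₁` intersects `L₃`. -/
def M13Set (i j n : ℕ) := {T ∈ USet i j n | Meets T.1 T.2.2}

/-- Triples where `L₂` intersects both `L₁` and `L₃`. -/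
def M1223Set (i j n : ℕ) :=
  {T ∈ USet i j n | Meets T.2.1 T.1 ∧ Meets T.2.1 T.2.2}

/-- Vicious (pairwise nonintersecting) triples. -/
def VSet (i j n : ℕ) :=
  {T ∈ USet i j n | ¬ Meets T.1 T.2.1 ∧ ¬ Meets T.2.1 T.2.2 ∧ ¬ Meets T.1 T.2.2}

/-- Pairs of walks of length `n` starting at heights `0` and `2i`. -/
def PairSet (i n : ℕ) : Set ((Fin (n + 1) → ℤ) × (Fin (n + 1) → ℤ)) :=
  {P | IsWalk n P.1 ∧ IsWalk n P.2 ∧ P.1 0 = 0 ∧ P.2 0 = 2 * i}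

/-- Intersecting pairs. -/
def MSet (i n : ℕ) := {P ∈ PairSet i n | Meets P.1 P.2}

/-- Nonintersecting (vicious) pairs. -/
def NSet (i n : ℕ) := {P ∈ PairSet i n | ¬ Meets P.1 P.2}

/-- Converging pairs: never meet before time `n`, meet at time `n`. -/
def TSet (i n : ℕ) :=
  {P ∈ PairSet i n | (∀ k : Fin (n + 1), (k : ℕ) < n → P.1 k ≠ P.2 k) ∧
    P.1 (Fin.last n) = P.2 (Fin.last n)}

/-- 2-watermelons of length `n`. -/
def MelonSet (n : ℕ) : Set ((Fin (n + 1) → ℤ) × (Fin (n + 1) → ℤ)) :=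
  {P | IsWalk n P.1 ∧ IsWalk n P.2 ∧ P.1 0 = 0 ∧ P.2 0 = 2 ∧
    P.2 (Fin.last n) = P.1 (Fin.last n) + 2 ∧ ∀ k, P.1 k < P.2 k}

/-- Partial Dyck paths of length `2n` from height `2i` to `0`, strictly positive before the end. -/
def PDyckSet (i n : ℕ) : Set (Fin (2 * n + 1) → ℤ) :=
  {Q | IsWalk (2 * n) Q ∧ Q 0 = 2 * i ∧ Q (Fin.last (2 * n)) = 0 ∧
    ∀ k : Fin (2 * n + 1), (k : ℕ) < 2 * n → 0 < Q k}

/-! ### Auxiliary development -/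

noncomputable def Dr : PowerSeries ℚ := PowerSeries.rescale (2 : ℚ) DGF

lemma catGF_eq : catGF = PowerSeries.mk fun n => (catalan n : ℚ) := by
  ext n
  simp only [catGF, coeff_mk]
  have h := succ_mul_catalan_eq_centralBinom n
  have h2 : Nat.centralBinom n = Nat.choose (2 * n) n := rfl
  rw [div_eq_iff (by positivity : ((n : ℚ) + 1) ≠ 0)]
  rw [h2] at h
  have := congrArg (fun m : ℕ => (m : ℚ)) h
  push_cast at this ⊢
  linarith

lemma catGF_fe : catGF = 1 + X * catGF ^ 2 := by
  rw [catGF_eq]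
  ext n
  cases n with
  | zero => simp
  | succ n =>
    rw [map_add, coeff_succ_X_mul, coeff_mk]
    have : (coeff n) ((PowerSeries.mk fun n => (catalan n : ℚ)) ^ 2) =
        ∑ ij ∈ antidiagonal n, (catalan ij.1 : ℚ) * catalan ij.2 := by
      rw [pow_two, coeff_mul]
      simp [coeff_mk]
    rw [coeff_one, if_neg (Nat.succ_ne_zero n), zero_add, this, catalan_succ' n]
    push_cast
    rfl

lemma DGF_fe : DGF = X * (1 + DGF) ^ 2 := by
  have h := catGF_fe
  unfold DGF
  linear_combination h

lemma rescale_two_X : PowerSeries.rescale (2 : ℚ) X = 2 * X := by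
  rw [PowerSeries.rescale_X]
  rw [show ((2 : ℚ⟦X⟧)) = C 2 by rfl]

lemma Dr_fe : Dr = 2 * X * (1 + Dr) ^ 2 := by
  have h := congrArg (PowerSeries.rescale (2 : ℚ)) DGF_fe
  rw [map_mul, map_pow, map_add, map_one, rescale_two_X] at h
  exact h

lemma Dr_const : constantCoeff Dr = 0 := by
  rw [Dr_fe]
  simp

noncomputable def Rser (x y : ℕ) : PowerSeries ℚ :=
  (1 - 8 * X)⁻¹ * ((1 - Dr ^ x) * (1 - Dr ^ y))

lemma unit_cancel : (1 - 8 * X : PowerSeries ℚ) * (1 - 8 * X)⁻¹ = 1 := by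
  apply PowerSeries.mul_inv_cancel
  simp

lemma Eprime (a b : ℕ) :
    (1 - Dr ^ (a + 1)) * (1 - Dr ^ (b + 1)) =
      (1 - 8 * X) + X * (2 * ((1 - Dr ^ (a + 1)) * (1 - Dr ^ (b + 1)))
        + (1 - Dr ^ (a + 1)) * (1 - Dr ^ b)
        + (1 - Dr ^ (a + 2)) * (1 - Dr ^ (b + 1))
        + (1 - Dr ^ (a + 2)) * (1 - Dr ^ b)
        + (1 - Dr ^ a) * (1 - Dr ^ (b + 2))
        + (1 - Dr ^ a) * (1 - Dr ^ (b + 1))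
        + (1 - Dr ^ (a + 1)) * (1 - Dr ^ (b + 2))) := by
  linear_combination (Dr ^ a * Dr ^ b * Dr - Dr ^ a - Dr ^ b) * Dr_fe

lemma Erec (a b : ℕ) :
    Rser (a + 1) (b + 1) = 1 + X * (Rser (a + 1) (b + 1) + Rser (a + 1) (b + 1)
      + Rser (a + 1) b + Rser (a + 2) (b + 1) + Rser (a + 2) b
      + Rser a (b + 2) + Rser a (b + 1) + Rser (a + 1) (b + 2)) := by
  unfold Rser
  linear_combination (1 - 8 * X : PowerSeries ℚ)⁻¹ * Eprime a b + unit_cancel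

/-! ### auxiliary combinatorics -/

def sgn (b : Bool) : ℤ := if b then 1 else -1

def nxf (x : ℕ) (s : Bool × Bool × Bool) : ℕ :=
  x + (if s.2.1 then 1 else 0) - (if s.1 then 1 else 0)

def nyf (y : ℕ) (s : Bool × Bool × Bool) : ℕ :=
  y + (if s.2.2 then 1 else 0) - (if s.2.1 then 1 else 0)

def GSet (x y n : ℕ) :
    Set ((Fin (n + 1) → ℤ) × (Fin (n + 1) → ℤ) × (Fin (n + 1) → ℤ)) :=
  {T | IsWalk n T.1 ∧ IsWalk n T.2.1 ∧ IsWalk n T.2.2 ∧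
    T.1 0 = 0 ∧ T.2.1 0 = 2 * x ∧ T.2.2 0 = 2 * x + 2 * y ∧
    ∀ k, T.1 k < T.2.1 k ∧ T.2.1 k < T.2.2 k}

lemma walk_step {n : ℕ} {L : Fin (n + 1) → ℤ} (h : IsWalk n L) (k : Fin n) :
    L k.succ - L k.castSucc = 1 ∨ L k.succ - L k.castSucc = -1 :=
  (abs_eq (by norm_num : (0:ℤ) ≤ 1)).mp (h k)

lemma no_meet_pos {n : ℕ} {L L' : Fin (n + 1) → ℤ} (hL : IsWalk n L) (hL' : IsWalk n L')
    (h0 : L 0 < L' 0) (he : (L' 0 - L 0) % 2 = 0) (hne : ∀ k, L k ≠ L' k) :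
    ∀ k, L k < L' k := by
  have key : ∀ k : Fin (n + 1), (L' k - L k) % 2 = 0 ∧ 0 < L' k - L k := by
    intro k
    induction k using Fin.induction with
    | zero => exact ⟨he, by omega⟩
    | succ k ih =>
      have h1 := walk_step hL k
      have h2 := walk_step hL' k
      have h3 : L k.succ ≠ L' k.succ := hne k.succ
      omega
  intro k
  have := key k
  omega

lemma VSet_eq_GSet' (i j n : ℕ) (hi : 1 ≤ i) (hj : 1 ≤ j) : VSet i j n = GSet i j n := by
  ext T
  simp only [VSet, GSet, USet, Set.mem_setOf_eq, Set.mem_sep_iff]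
  constructor
  · rintro ⟨⟨w1, w2, w3, s1, s2, s3⟩, m12, m23, _⟩
    refine ⟨w1, w2, w3, s1, s2, s3, fun k => ⟨?_, ?_⟩⟩
    · refine no_meet_pos w1 w2 ?_ ?_ (fun k hk => m12 ⟨k, hk⟩) k <;> rw [s1, s2] <;> omega
    · refine no_meet_pos w2 w3 ?_ ?_ (fun k hk => m23 ⟨k, hk⟩) k <;> rw [s2, s3] <;> omega
  · rintro ⟨w1, w2, w3, s1, s2, s3, hord⟩
    exact ⟨⟨w1, w2, w3, s1, s2, s3⟩,
      fun ⟨k, hk⟩ => absurd hk (ne_of_lt (hord k).1),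
      fun ⟨k, hk⟩ => absurd hk (ne_of_lt (hord k).2),
      fun ⟨k, hk⟩ => absurd hk (ne_of_lt ((hord k).1.trans (hord k).2))⟩

lemma GSet_zero_left (y n : ℕ) : GSet 0 y n = ∅ := by
  ext T
  simp only [GSet, Set.mem_setOf_eq, Set.mem_empty_iff_false, iff_false]
  rintro ⟨-, -, -, s1, s2, -, hord⟩
  have := (hord 0).1
  omega

lemma GSet_zero_right (x n : ℕ) : GSet x 0 n = ∅ := by
  ext T
  simp only [GSet, Set.mem_setOf_eq, Set.mem_empty_iff_false, iff_false]
  rintro ⟨-, -, -, -, s2, s3, hord⟩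
  have := (hord 0).2
  omega

lemma GSet_len_zero (x y : ℕ) (hx : 1 ≤ x) (hy : 1 ≤ y) :
    GSet x y 0 = {((fun _ => (0 : ℤ)), (fun _ => (2 * x : ℤ)), (fun _ => (2 * x + 2 * y : ℤ)))} := by
  ext T
  simp only [GSet, Set.mem_setOf_eq, Set.mem_singleton_iff]
  constructor
  · rintro ⟨-, -, -, s1, s2, s3, -⟩
    refine Prod.ext ?_ (Prod.ext ?_ ?_) <;> funext k <;>
      rw [show k = 0 from Fin.eq_zero k] <;> assumption
  · rintro rfl
    refine ⟨fun k => k.elim0, fun k => k.elim0, fun k => k.elim0, rfl, rfl, rfl, fun k => ⟨?_, ?_⟩⟩ <;>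
      simp <;> omega

/-! ### the step bijection -/

def stepB {m : ℕ} (L : Fin (m + 2) → ℤ) : Bool := decide (L 0 < L 1)

lemma walk_first_step {n : ℕ} {L : Fin (n + 2) → ℤ} (h : IsWalk (n + 1) L) :
    L 1 = L 0 + sgn (stepB L) := by
  have h0 := walk_step h 0
  rw [Fin.succ_zero_eq_one, Fin.castSucc_zero] at h0
  unfold stepB sgn
  by_cases hlt : L 0 < L 1 <;> simp [hlt] <;> omega

lemma two_nxf (x : ℕ) (hx : 1 ≤ x) (s : Bool × Bool × Bool) :
    (2 * nxf x s : ℤ) = 2 * x + sgn s.2.1 - sgn s.1 := by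
  obtain ⟨s1, s2, s3⟩ := s
  cases s1 <;> cases s2 <;> simp [nxf, sgn] <;> omega

lemma two_nyf (y : ℕ) (hy : 1 ≤ y) (s : Bool × Bool × Bool) :
    (2 * nyf y s : ℤ) = 2 * y + sgn s.2.2 - sgn s.2.1 := by
  obtain ⟨s1, s2, s3⟩ := s
  cases s2 <;> cases s3 <;> simp [nyf, sgn] <;> omega

def buildW {n : ℕ} (v c : ℤ) (L : Fin (n + 1) → ℤ) : Fin (n + 2) → ℤ :=
  Fin.cases v (fun k => L k + c)

lemma buildW_zero {n : ℕ} (v c : ℤ) (L : Fin (n + 1) → ℤ) : buildW v c L 0 = v := rfl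

lemma buildW_succ {n : ℕ} (v c : ℤ) (L : Fin (n + 1) → ℤ) (k : Fin (n + 1)) :
    buildW v c L k.succ = L k + c := by
  simp [buildW]

lemma buildW_one {n : ℕ} (v c : ℤ) (L : Fin (n + 1) → ℤ) :
    buildW v c L 1 = L 0 + c := by
  rw [← Fin.succ_zero_eq_one, buildW_succ]

lemma isWalk_buildW {n : ℕ} {v c : ℤ} {L : Fin (n + 1) → ℤ} (hL : IsWalk n L)
    (h0 : |L 0 + c - v| = 1) : IsWalk (n + 1) (buildW v c L) := by
  intro k
  induction k using Fin.cases with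
  | zero =>
    rw [Fin.succ_zero_eq_one, Fin.castSucc_zero, buildW_one, buildW_zero]
    exact h0
  | succ k =>
    rw [← Fin.succ_castSucc, buildW_succ, buildW_succ]
    have := hL k
    rw [show L k.succ + c - (L k.castSucc + c) = L k.succ - L k.castSucc by ring]
    exact this

lemma sgn_inj {p q : Bool} (h : sgn p = sgn q) : p = q := by
  cases p <;> cases q <;> simp_all [sgn]

variable {a b n : ℕ}

def Fmap (a b n : ℕ) :
    ((s : Bool × Bool × Bool) × ↥(GSet (nxf (a + 1) s) (nyf (b + 1) s) n)) →
    (Fin (n + 2) → ℤ) × (Fin (n + 2) → ℤ) × (Fin (n + 2) → ℤ)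
  | ⟨s, ⟨T', _⟩⟩ =>
    (buildW 0 (sgn s.1) T'.1,
     buildW (2 * ((a : ℤ) + 1)) (sgn s.1) T'.2.1,
     buildW (2 * ((a : ℤ) + 1) + 2 * ((b : ℤ) + 1)) (sgn s.1) T'.2.2)

lemma Fmap_mem (p : (s : Bool × Bool × Bool) × ↥(GSet (nxf (a + 1) s) (nyf (b + 1) s) n)) :
    Fmap a b n p ∈ GSet (a + 1) (b + 1) (n + 1) := by
  obtain ⟨s, ⟨T', hT'⟩⟩ := p
  obtain ⟨w1, w2, w3, s1, s2, s3, hord⟩ := hT'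
  have hnx := two_nxf (a + 1) (Nat.le_add_left 1 a) s
  have hny := two_nyf (b + 1) (Nat.le_add_left 1 b) s
  have habs1 : |sgn s.1| = 1 := by cases s.1 <;> simp [sgn]
  have habs2 : |sgn s.2.1| = 1 := by cases s.2.1 <;> simp [sgn]
  have habs3 : |sgn s.2.2| = 1 := by cases s.2.2 <;> simp [sgn]
  simp only [Fmap, GSet, Set.mem_setOf_eq]
  refine ⟨?_, ?_, ?_, ?_, ?_, ?_, ?_⟩
  · refine isWalk_buildW w1 ?_
    rw [s1, show (0 : ℤ) + sgn s.1 - 0 = sgn s.1 by ring]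
    exact habs1
  · refine isWalk_buildW w2 ?_
    rw [s2, show (2 * (nxf (a+1) s : ℤ)) + sgn s.1 - 2 * ((a : ℤ) + 1) = sgn s.2.1 by omega]
    exact habs2
  · refine isWalk_buildW w3 ?_
    rw [s3, show (2 * (nxf (a+1) s : ℤ) + 2 * (nyf (b+1) s : ℤ)) + sgn s.1
        - (2 * ((a : ℤ) + 1) + 2 * ((b : ℤ) + 1)) = sgn s.2.2 by omega]
    exact habs3
  · rw [buildW_zero]
  · rw [buildW_zero]; push_cast; ring
  · rw [buildW_zero]; push_cast; ring
  · intro k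
    induction k using Fin.cases with
    | zero =>
      rw [buildW_zero, buildW_zero, buildW_zero]
      constructor <;> omega
    | succ k =>
      have := hord k
      rw [buildW_succ, buildW_succ, buildW_succ]
      constructor <;> omega

lemma Fmap_inj : Function.Injective (Fmap a b n) := by
  rintro ⟨s, ⟨T', hT'⟩⟩ ⟨t, ⟨T2, hT2⟩⟩ hh
  obtain ⟨-, -, -, s1, s2, s3, -⟩ := id hT'
  obtain ⟨-, -, -, t1, t2, t3, -⟩ := id hT2
  simp only [Fmap, Prod.mk.injEq] at hh
  obtain ⟨e1, e2, e3⟩ := hh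
  have hnx := two_nxf (a + 1) (Nat.le_add_left 1 a) s
  have hny := two_nyf (b + 1) (Nat.le_add_left 1 b) s
  have hnx' := two_nxf (a + 1) (Nat.le_add_left 1 a) t
  have hny' := two_nyf (b + 1) (Nat.le_add_left 1 b) t
  have q1 : T'.1 0 + sgn s.1 = T2.1 0 + sgn t.1 := by
    have := congrFun e1 (Fin.succ 0); rwa [buildW_succ, buildW_succ] at this
  have q2 : T'.2.1 0 + sgn s.1 = T2.2.1 0 + sgn t.1 := by
    have := congrFun e2 (Fin.succ 0); rwa [buildW_succ, buildW_succ] at this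
  have q3 : T'.2.2 0 + sgn s.1 = T2.2.2 0 + sgn t.1 := by
    have := congrFun e3 (Fin.succ 0); rwa [buildW_succ, buildW_succ] at this
  rw [s1, t1] at q1
  rw [s2, t2] at q2
  rw [s3, t3] at q3
  have g1 : sgn s.1 = sgn t.1 := by linarith
  have g2 : sgn s.2.1 = sgn t.2.1 := by linarith
  have g3 : sgn s.2.2 = sgn t.2.2 := by linarith
  have hs : s = t :=
    Prod.ext (sgn_inj g1) (Prod.ext (sgn_inj g2) (sgn_inj g3))
  subst hs
  refine congrArg (Sigma.mk s) (Subtype.ext (Prod.ext ?_ (Prod.ext ?_ ?_))) <;> funext k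
  · show T'.1 k = T2.1 k
    have := congrFun e1 k.succ; rw [buildW_succ, buildW_succ] at this; omega
  · show T'.2.1 k = T2.2.1 k
    have := congrFun e2 k.succ; rw [buildW_succ, buildW_succ] at this; omega
  · show T'.2.2 k = T2.2.2 k
    have := congrFun e3 k.succ; rw [buildW_succ, buildW_succ] at this; omega

def tailW {n : ℕ} (L : Fin (n + 2) → ℤ) (c : ℤ) : Fin (n + 1) → ℤ := fun k => L k.succ - c

lemma Fmap_surj_on {T : (Fin (n + 2) → ℤ) × (Fin (n + 2) → ℤ) × (Fin (n + 2) → ℤ)}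
    (hT : T ∈ GSet (a + 1) (b + 1) (n + 1)) :
    ∃ p, Fmap a b n p = T := by
  obtain ⟨w1, w2, w3, s1, s2, s3, hord⟩ := hT
  have f1 : T.1 1 = T.1 0 + sgn (stepB T.1) := walk_first_step w1
  have f2 : T.2.1 1 = T.2.1 0 + sgn (stepB T.2.1) := walk_first_step w2
  have f3 : T.2.2 1 = T.2.2 0 + sgn (stepB T.2.2) := walk_first_step w3
  have hnx := two_nxf (a + 1) (Nat.le_add_left 1 a) (stepB T.1, stepB T.2.1, stepB T.2.2)
  have hny := two_nyf (b + 1) (Nat.le_add_left 1 b) (stepB T.1, stepB T.2.1, stepB T.2.2)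
  dsimp only at hnx hny
  have hmem : (tailW T.1 (T.1 1), tailW T.2.1 (T.1 1), tailW T.2.2 (T.1 1)) ∈
      GSet (nxf (a + 1) (stepB T.1, stepB T.2.1, stepB T.2.2))
        (nyf (b + 1) (stepB T.1, stepB T.2.1, stepB T.2.2)) n := by
    refine ⟨?_, ?_, ?_, ?_, ?_, ?_, ?_⟩
    · intro k
      have := w1 k.succ
      rw [← Fin.succ_castSucc] at this
      simpa [tailW] using this
    · intro k
      have := w2 k.succ
      rw [← Fin.succ_castSucc] at this
      simpa [tailW] using this
    · intro k
      have := w3 k.succ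
      rw [← Fin.succ_castSucc] at this
      simpa [tailW] using this
    · show T.1 (Fin.succ 0) - T.1 1 = 0
      rw [Fin.succ_zero_eq_one]; ring
    · show T.2.1 (Fin.succ 0) - T.1 1 = 2 * (nxf (a + 1) (stepB T.1, stepB T.2.1, stepB T.2.2) : ℤ)
      rw [Fin.succ_zero_eq_one]; omega
    · show T.2.2 (Fin.succ 0) - T.1 1 = 2 * (nxf (a + 1) (stepB T.1, stepB T.2.1, stepB T.2.2) : ℤ)
        + 2 * (nyf (b + 1) (stepB T.1, stepB T.2.1, stepB T.2.2) : ℤ)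
      rw [Fin.succ_zero_eq_one]; omega
    · intro k
      have := hord k.succ
      constructor <;> simp only [tailW] <;> omega
  have c1 : buildW 0 (sgn (stepB T.1)) (tailW T.1 (T.1 1)) = T.1 := by
    funext k
    induction k using Fin.cases with
    | zero => rw [buildW_zero]; omega
    | succ k => rw [buildW_succ]; simp only [tailW]; omega
  have c2 : buildW (2 * ((a : ℤ) + 1)) (sgn (stepB T.1)) (tailW T.2.1 (T.1 1)) = T.2.1 := by
    funext k
    induction k using Fin.cases with
    | zero => rw [buildW_zero]; push_cast at s2 ⊢; omega
    | succ k => rw [buildW_succ]; simp only [tailW]; omega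
  have c3 : buildW (2 * ((a : ℤ) + 1) + 2 * ((b : ℤ) + 1)) (sgn (stepB T.1)) (tailW T.2.2 (T.1 1)) = T.2.2 := by
    funext k
    induction k using Fin.cases with
    | zero => rw [buildW_zero]; push_cast at s3 ⊢; omega
    | succ k => rw [buildW_succ]; simp only [tailW]; omega
  refine ⟨⟨(stepB T.1, stepB T.2.1, stepB T.2.2), ⟨_, hmem⟩⟩, ?_⟩
  simp only [Fmap]
  rw [c1, c2, c3]

def FmapS (a b n : ℕ)
    (p : (s : Bool × Bool × Bool) × ↥(GSet (nxf (a + 1) s) (nyf (b + 1) s) n)) :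
    ↥(GSet (a + 1) (b + 1) (n + 1)) :=
  ⟨Fmap a b n p, Fmap_mem p⟩

lemma FmapS_bij : Function.Bijective (FmapS a b n) := by
  constructor
  · intro p q h
    exact Fmap_inj (congrArg Subtype.val h)
  · rintro ⟨T, hT⟩
    obtain ⟨p, hp⟩ := Fmap_surj_on hT
    exact ⟨p, Subtype.ext hp⟩

lemma nat_card_sigma {ι : Type*} [Fintype ι] {β : ι → Type*} [∀ i, Finite (β i)] :
    Nat.card ((i : ι) × β i) = ∑ i, Nat.card (β i) := by
  haveI : ∀ i, Fintype (β i) := fun i => Fintype.ofFinite _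
  simp only [Nat.card_eq_fintype_card]
  exact Fintype.card_sigma

lemma GSet_finite : ∀ n x y : ℕ, (GSet x y n).Finite := by
  intro n
  induction n with
  | zero =>
    intro x y
    match x, y with
    | 0, y => rw [GSet_zero_left]; exact Set.finite_empty
    | x + 1, 0 => rw [GSet_zero_right]; exact Set.finite_empty
    | x + 1, y + 1 =>
      rw [GSet_len_zero (x + 1) (y + 1) (Nat.le_add_left 1 x) (Nat.le_add_left 1 y)]
      exact Set.finite_singleton _
  | succ n ih =>
    intro x y
    match x, y with
    | 0, y => rw [GSet_zero_left]; exact Set.finite_empty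
    | x + 1, 0 => rw [GSet_zero_right]; exact Set.finite_empty
    | a + 1, b + 1 =>
      haveI : ∀ s : Bool × Bool × Bool, Finite ↥(GSet (nxf (a + 1) s) (nyf (b + 1) s) n) :=
        fun s => (ih _ _).to_subtype
      exact Set.finite_coe_iff.mp (Finite.of_surjective (FmapS a b n) FmapS_bij.surjective)

lemma card_GSet_rec (a b n : ℕ) :
    Nat.card (GSet (a + 1) (b + 1) (n + 1)) =
      ∑ s : Bool × Bool × Bool, Nat.card (GSet (nxf (a + 1) s) (nyf (b + 1) s) n) := by
  haveI : ∀ s : Bool × Bool × Bool, Finite ↥(GSet (nxf (a + 1) s) (nyf (b + 1) s) n) :=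
    fun s => (GSet_finite n _ _).to_subtype
  rw [← Nat.card_eq_of_bijective (FmapS a b n) FmapS_bij]
  exact nat_card_sigma


lemma main_count : ∀ n x y : ℕ, (Nat.card (GSet x y n) : ℚ) = coeff n (Rser x y) := by
  intro n
  induction n with
  | zero =>
    intro x y
    match x, y with
    | 0, y => rw [GSet_zero_left]; simp [Rser]
    | x + 1, 0 => rw [GSet_zero_right]; simp [Rser]
    | a + 1, b + 1 =>
      rw [GSet_len_zero (a + 1) (b + 1) (Nat.le_add_left 1 a) (Nat.le_add_left 1 b)]
      rw [coeff_zero_eq_constantCoeff]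
      simp [Rser, Dr_const, PowerSeries.constantCoeff_inv]
  | succ n ih =>
    intro x y
    match x, y with
    | 0, y => rw [GSet_zero_left]; simp [Rser]
    | x + 1, 0 => rw [GSet_zero_right]; simp [Rser]
    | a + 1, b + 1 =>
      have h1 : (Nat.card (GSet (a + 1) (b + 1) (n + 1)) : ℚ)
          = ∑ s : Bool × Bool × Bool,
              (Nat.card (GSet (nxf (a + 1) s) (nyf (b + 1) s) n) : ℚ) := by
        rw [card_GSet_rec]; push_cast [Nat.cast_sum]; rfl
      rw [h1]
      have h2 : ∀ s : Bool × Bool × Bool,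
          (Nat.card (GSet (nxf (a + 1) s) (nyf (b + 1) s) n) : ℚ)
            = coeff n (Rser (nxf (a + 1) s) (nyf (b + 1) s)) := fun s => ih _ _
      simp only [h2]
      have h3 : (∑ s : Bool × Bool × Bool, coeff n (Rser (nxf (a + 1) s) (nyf (b + 1) s)))
          = coeff n (Rser (a + 1) (b + 1) + Rser (a + 1) (b + 1)
              + Rser (a + 1) b + Rser (a + 2) (b + 1) + Rser (a + 2) b
              + Rser a (b + 2) + Rser a (b + 1) + Rser (a + 1) (b + 2)) := by
        simp only [map_add, Fintype.sum_prod_type, Fintype.sum_bool, nxf, nyf,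
          if_true, if_false]
        norm_num
        ring
      have h4 : coeff (n + 1) (Rser (a + 1) (b + 1))
          = coeff n (Rser (a + 1) (b + 1) + Rser (a + 1) (b + 1)
              + Rser (a + 1) b + Rser (a + 2) (b + 1) + Rser (a + 2) b
              + Rser a (b + 2) + Rser a (b + 1) + Rser (a + 1) (b + 2)) := by
        conv_lhs => rw [Erec a b]
        rw [map_add, coeff_succ_X_mul, coeff_one, if_neg (Nat.succ_ne_zero n), zero_add]
      rw [h3, h4]

theorem stmt15 (i j : ℕ) (hi : 1 ≤ i) (hj : 1 ≤ j) :
    PowerSeries.mk (fun n => (Nat.card (VSet i j n) : ℚ)) =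
      (1 - 8 * PowerSeries.X)⁻¹ *
        (1 - (PowerSeries.rescale (2 : ℚ) DGF) ^ i) *
        (1 - (PowerSeries.rescale (2 : ℚ) DGF) ^ j) := by

  have key : ∀ n : ℕ, (Nat.card (VSet i j n) : ℚ) = coeff n (Rser i j) := by
    intro n
    rw [VSet_eq_GSet' i j n hi hj]
    exact main_count n i j
  ext n
  rw [coeff_mk, key n]
  simp only [Rser, Dr]
  ring
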